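/- arXiv:0907.4698 — 3 statements merged into one kernel-verified Lean document; each statement's English description precedes it below -/
import Mathlib

section
/- Let Σ be a p×p real symmetric positive semidefinite matrix with Σ ≠ 0, let p ≥ 2 and n ≥ 1 be integers. Then the denominator (n+1−2/p)·Tr(Σ²) + (1−n/p)·Tr(Σ)² is strictly positive, and the oracle shrinkage coefficient ρ_O = ((1−2/p)·Tr(Σ²) + Tr(Σ)²) / ((n+1−2/p)·Tr(Σ²) + (1−n/p)·Tr(Σ)²) satisfies 0 < ρ_O ≤ 1. -/
open Matrix

lemma psd_entry_sq_le {p : ℕ} {C : Matrix (Fin p) (Fin p) ℝ} (hC : C.PosSemidef)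
    (i j : Fin p) : C i j ^ 2 ≤ C i i * C j j := by
  have hsymm : C j i = C i j := by
    have := congrFun (congrFun hC.1 i) j
    simpa [conjTranspose_apply] using this
  have hq : ∀ t : ℝ, 0 ≤ C j j * (t * t) + (2 * C i j) * t + C i i := by
    intro t
    have h := hC.dotProduct_mulVec_nonneg ((Pi.single i 1 : Fin p → ℝ) + t • (Pi.single j 1 : Fin p → ℝ))
    simp only [star_trivial, dotProduct_add, add_dotProduct, smul_dotProduct,
      dotProduct_smul, mulVec_add, mulVec_smul, mulVec_single, mul_one,
      single_dotProduct, dotProduct_single, smul_eq_mul, Pi.smul_apply] at h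
    simp only [MulOpposite.op_one, one_smul, one_mul, col_apply, smul_eq_mul] at h
    rw [hsymm] at h
    nlinarith [h]
  have hd := discrim_le_zero hq
  rw [discrim] at hd
  nlinarith [hd]

/-- positivity of the denominator and bounds `0 < ρ_O ≤ 1` for the
oracle shrinkage coefficient. -/
theorem oracle_shrinkage_coefficient_bounds
    (p n : ℕ) (hp : 2 ≤ p) (hn : 1 ≤ n)
    (C : Matrix (Fin p) (Fin p) ℝ) (hC : C.PosSemidef) (hC0 : C ≠ 0) :
    0 < ((n : ℝ) + 1 - 2 / (p : ℝ)) * (C * C).trace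
        + (1 - (n : ℝ) / (p : ℝ)) * C.trace ^ 2 ∧
    0 < ((1 - 2 / (p : ℝ)) * (C * C).trace + C.trace ^ 2)
        / (((n : ℝ) + 1 - 2 / (p : ℝ)) * (C * C).trace
            + (1 - (n : ℝ) / (p : ℝ)) * C.trace ^ 2) ∧
    ((1 - 2 / (p : ℝ)) * (C * C).trace + C.trace ^ 2)
        / (((n : ℝ) + 1 - 2 / (p : ℝ)) * (C * C).trace
            + (1 - (n : ℝ) / (p : ℝ)) * C.trace ^ 2) ≤ 1 := by
  have hsymm : ∀ i j, C j i = C i j := by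
    intro i j
    have := congrFun (congrFun hC.1 i) j
    simpa [conjTranspose_apply] using this
  set T1 := C.trace with hT1def
  set T2 := (C * C).trace with hT2def
  have hT2eq : T2 = ∑ i, ∑ j, C i j ^ 2 := by
    rw [hT2def, trace]
    simp only [diag_apply, mul_apply]
    exact Finset.sum_congr rfl fun i _ => Finset.sum_congr rfl fun j _ => by
      rw [hsymm i j]; ring
  have hex : ∃ i j, C i j ≠ 0 := by
    by_contra h
    push_neg at h
    exact hC0 (by ext i j; exact h i j)
  obtain ⟨i0, j0, hij0⟩ := hex
  have hT2pos : 0 < T2 := by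
    rw [hT2eq]
    calc (0:ℝ) < C i0 j0 ^ 2 := by positivity
      _ ≤ ∑ j, C i0 j ^ 2 :=
          Finset.single_le_sum (f := fun j => C i0 j ^ 2) (fun j _ => by positivity)
            (Finset.mem_univ j0)
      _ ≤ ∑ i, ∑ j, C i j ^ 2 :=
          Finset.single_le_sum (f := fun i => ∑ j, C i j ^ 2) (fun i _ => by positivity)
            (Finset.mem_univ i0)
  have hT1eq : T1 = ∑ i, C i i := rfl
  have hle1 : T2 ≤ T1 ^ 2 := by
    rw [hT2eq, hT1eq, sq, Finset.sum_mul_sum]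
    exact Finset.sum_le_sum fun i _ => Finset.sum_le_sum fun j _ => psd_entry_sq_le hC i j
  have hle2 : T1 ^ 2 ≤ (p : ℝ) * T2 := by
    have h1 : (∑ i, C i i) ^ 2 ≤ (Finset.univ : Finset (Fin p)).card * ∑ i, C i i ^ 2 :=
      sq_sum_le_card_mul_sum_sq
    have h2 : ∑ i, C i i ^ 2 ≤ ∑ i, ∑ j, C i j ^ 2 :=
      Finset.sum_le_sum fun i _ =>
        Finset.single_le_sum (f := fun j => C i j ^ 2) (fun j _ => by positivity)
          (Finset.mem_univ i)
    rw [hT1eq, hT2eq]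
    calc (∑ i, C i i) ^ 2 ≤ (p : ℝ) * ∑ i, C i i ^ 2 := by
          simpa [Finset.card_univ] using h1
      _ ≤ (p : ℝ) * ∑ i, ∑ j, C i j ^ 2 := mul_le_mul_of_nonneg_left h2 (by positivity)
  have hp0 : (0:ℝ) < p := by positivity
  have hp2 : (2:ℝ) ≤ p := by exact_mod_cast hp
  have hn1 : (1:ℝ) ≤ n := by exact_mod_cast hn
  have h2p : 2 / (p:ℝ) ≤ 1 := by rw [div_le_one hp0]; exact hp2
  set N := (1 - 2 / (p : ℝ)) * T2 + T1 ^ 2 with hNdef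
  set D := ((n : ℝ) + 1 - 2 / (p : ℝ)) * T2 + (1 - (n : ℝ) / (p : ℝ)) * T1 ^ 2 with hDdef
  have hNpos : 0 < N := by
    have h0 : 0 ≤ (1 - 2 / (p:ℝ)) * T2 := mul_nonneg (by linarith) hT2pos.le
    rw [hNdef]
    nlinarith [h0, hle1, hT2pos]
  have hNleD : N ≤ D := by
    have hkey : (n:ℝ)/p * T1^2 ≤ (n:ℝ)/p * ((p:ℝ) * T2) :=
      mul_le_mul_of_nonneg_left hle2 (by positivity)
    have heq : (n:ℝ)/p * ((p:ℝ) * T2) = n * T2 := by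
      field_simp
    have hkey2 : (n:ℝ)/p * T1^2 ≤ (n:ℝ) * T2 := heq ▸ hkey
    rw [← sub_nonneg, hDdef, hNdef]
    have : ((n:ℝ) + 1 - 2 / (p:ℝ)) * T2 + (1 - (n:ℝ) / (p:ℝ)) * T1 ^ 2
        - ((1 - 2 / (p:ℝ)) * T2 + T1 ^ 2) = (n:ℝ) * T2 - (n:ℝ)/p * T1^2 := by ring
    rw [this]
    linarith [hkey2]
  have hDpos : 0 < D := lt_of_lt_of_le hNpos hNleD
  exact ⟨hDpos, div_pos hNpos hDpos, (div_le_one hDpos).mpr hNleD⟩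
end

section
/- Let n ≥ 2 be an integer and let μ be the Haar probability measure on the orthogonal group O(n) of n×n real matrices. Then ∫ Q₁₁⁴ dμ(Q) = 3/(n(n+2)) and ∫ Q₁₁²·Q₂₁² dμ(Q) = 1/(n(n+2)). -/
open MeasureTheory Matrix

/-- The Borel (= product) σ-algebra on matrices. -/
instance matrixMeasurableSpace {m n α : Type*} [MeasurableSpace α] :
    MeasurableSpace (Matrix m n α) :=
  inferInstanceAs (MeasurableSpace (m → n → α))

variable {n : ℕ}

lemma sum_two {i j : Fin n} (h : i ≠ j) (x y : ℝ) (g : Fin n → ℝ) :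
    ∑ k, (if k = i then x else if k = j then y else 0) * g k = x * g i + y * g j := by
  have hp : ∀ k : Fin n, (if k = i then x else if k = j then y else 0) * g k =
      (if k = i then x * g i else 0) + (if k = j then y * g j else 0) := by
    intro k
    rcases eq_or_ne k i with rfl | h1
    · rw [if_pos rfl, if_pos rfl, if_neg h, add_zero]
    · rw [if_neg h1, if_neg h1, zero_add]
      rcases eq_or_ne k j with rfl | h2
      · rw [if_pos rfl, if_pos rfl]
      · rw [if_neg h2, if_neg h2, zero_mul]
  rw [Finset.sum_congr rfl fun k _ => hp k, Finset.sum_add_distrib]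
  simp

lemma sum_delta (a : Fin n) (g : Fin n → ℝ) :
    ∑ k, (if k = a then (1:ℝ) else 0) * g k = g a := by
  have hp : ∀ k : Fin n, (if k = a then (1:ℝ) else 0) * g k =
      if k = a then g k else 0 := by
    intro k
    rcases eq_or_ne k a with rfl | h1
    · rw [if_pos rfl, if_pos rfl, one_mul]
    · rw [if_neg h1, if_neg h1, zero_mul]
  rw [Finset.sum_congr rfl fun k _ => hp k]
  simp

/-- permutation matrix -/
def pmat (σ : Equiv.Perm (Fin n)) : Matrix (Fin n) (Fin n) ℝ :=
  Matrix.of fun a b => if b = σ.symm a then 1 else 0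

lemma pmat_mul_apply (σ : Equiv.Perm (Fin n)) (M : Matrix (Fin n) (Fin n) ℝ) (a b : Fin n) :
    (pmat σ * M) a b = M (σ.symm a) b := by
  simp only [Matrix.mul_apply, pmat, Matrix.of_apply]
  exact sum_delta (σ.symm a) fun k => M k b

lemma pmat_mem (σ : Equiv.Perm (Fin n)) : pmat σ ∈ Matrix.orthogonalGroup (Fin n) ℝ := by
  rw [Matrix.mem_orthogonalGroup_iff]
  ext a b
  simp only [Matrix.mul_apply, Matrix.star_apply, Matrix.transpose_apply, star_trivial, pmat, Matrix.of_apply]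
  have hp : ∀ k : Fin n, (if k = σ.symm a then (1:ℝ) else 0) * (if k = σ.symm b then 1 else 0)
      = if k = σ.symm a then (if a = b then (1:ℝ) else 0) else 0 := by
    intro k
    rcases eq_or_ne k (σ.symm a) with rfl | h1
    · rcases eq_or_ne a b with rfl | h2
      · simp
      · have : σ.symm a ≠ σ.symm b := fun hh => h2 (σ.symm.injective hh)
        simp [this, h2]
    · simp [h1]
  rw [Finset.sum_congr rfl fun k _ => hp k]
  simp [Matrix.one_apply]

noncomputable def cc : ℝ := Real.sqrt 2 / 2

lemma cc_mul_self : cc * cc = 1 / 2 := by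
  have : Real.sqrt 2 * Real.sqrt 2 = 2 := Real.mul_self_sqrt (by norm_num)
  unfold cc; rw [div_mul_div_comm, this]; norm_num

/-- rotation by 45° in the (i0,i1)-plane -/
noncomputable def rmat (i0 i1 : Fin n) : Matrix (Fin n) (Fin n) ℝ :=
  Matrix.of fun a b =>
    if a = i0 then (if b = i0 then cc else if b = i1 then -cc else 0)
    else if a = i1 then (if b = i0 then cc else if b = i1 then cc else 0)
    else if b = a then 1 else 0

lemma rmat_row0 {i0 i1 : Fin n} (k : Fin n) :
    rmat i0 i1 i0 k = if k = i0 then cc else if k = i1 then -cc else 0 := by simp [rmat]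

lemma rmat_row1 {i0 i1 : Fin n} (h : i0 ≠ i1) (k : Fin n) :
    rmat i0 i1 i1 k = if k = i0 then cc else if k = i1 then cc else 0 := by
  simp [rmat, h.symm]

lemma rmat_rowe {i0 i1 a : Fin n} (ha0 : a ≠ i0) (ha1 : a ≠ i1) (k : Fin n) :
    rmat i0 i1 a k = if k = a then 1 else 0 := by simp [rmat, ha0, ha1]

lemma rmat_mem {i0 i1 : Fin n} (h : i0 ≠ i1) :
    rmat i0 i1 ∈ Matrix.orthogonalGroup (Fin n) ℝ := by
  rw [Matrix.mem_orthogonalGroup_iff]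
  ext a b
  simp only [Matrix.mul_apply, Matrix.star_apply, Matrix.transpose_apply, star_trivial]
  by_cases ha0 : a = i0
  · subst ha0
    simp only [rmat_row0]
    rw [sum_two h]
    by_cases hb0 : b = a
    · subst hb0
      rw [rmat_row0, rmat_row0, Matrix.one_apply_eq]
      split_ifs <;> first | ring1 | linear_combination 2 * cc_mul_self | simp_all
    by_cases hb1 : b = i1
    · subst hb1
      rw [rmat_row1 h, rmat_row1 h, Matrix.one_apply_ne (Ne.symm hb0)]
      split_ifs <;> first | ring1 | linear_combination 2 * cc_mul_self | simp_all
    · rw [rmat_rowe (fun hh => hb0 hh) hb1, rmat_rowe (fun hh => hb0 hh) hb1,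
        Matrix.one_apply_ne (Ne.symm hb0)]
      rw [if_neg (fun hh : a = b => hb0 hh.symm), if_neg (fun hh : i1 = b => hb1 hh.symm)]
      ring
  by_cases ha1 : a = i1
  · subst ha1
    simp only [rmat_row1 h]
    rw [sum_two h]
    by_cases hb0 : b = i0
    · subst hb0
      rw [rmat_row0, rmat_row0, Matrix.one_apply_ne (Ne.symm h)]
      split_ifs <;> first | ring1 | linear_combination 2 * cc_mul_self | simp_all
    by_cases hb1 : b = a
    · subst hb1
      rw [rmat_row1 h, rmat_row1 h, Matrix.one_apply_eq]
      split_ifs <;> first | ring1 | linear_combination 2 * cc_mul_self | simp_all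
    · rw [rmat_rowe hb0 (fun hh => hb1 hh), rmat_rowe hb0 (fun hh => hb1 hh),
        Matrix.one_apply_ne (Ne.symm hb1)]
      rw [if_neg (fun hh : i0 = b => hb0 hh.symm), if_neg (fun hh : a = b => hb1 hh.symm)]
      ring
  · simp only [rmat_rowe ha0 ha1]
    rw [sum_delta]
    by_cases hb0 : b = i0
    · subst hb0
      rw [rmat_row0, if_neg ha0, if_neg ha1, Matrix.one_apply_ne (fun hh => ha0 hh)]
    by_cases hb1 : b = i1
    · subst hb1
      rw [rmat_row1 h, if_neg ha0, if_neg ha1, Matrix.one_apply_ne (fun hh => ha1 hh)]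
    · rw [rmat_rowe hb0 hb1, Matrix.one_apply]

lemma rmat_mul_apply0 {i0 i1 : Fin n} (h : i0 ≠ i1) (M : Matrix (Fin n) (Fin n) ℝ) (b : Fin n) :
    (rmat i0 i1 * M) i0 b = cc * M i0 b + (-cc) * M i1 b := by
  simp only [Matrix.mul_apply, rmat_row0]
  exact sum_two h _ _ _

lemma rmat_mul_apply1 {i0 i1 : Fin n} (h : i0 ≠ i1) (M : Matrix (Fin n) (Fin n) ℝ) (b : Fin n) :
    (rmat i0 i1 * M) i1 b = cc * M i0 b + cc * M i1 b := by
  simp only [Matrix.mul_apply, rmat_row1 h]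
  exact sum_two h _ _ _

lemma measurable_entry (i j : Fin n) :
    Measurable fun Q : ↥(Matrix.orthogonalGroup (Fin n) ℝ) => (Q : Matrix (Fin n) (Fin n) ℝ) i j :=
  (measurable_subtype_coe (α := Matrix (Fin n) (Fin n) ℝ)).eval.eval

instance : MeasurableMul ↥(Matrix.orthogonalGroup (Fin n) ℝ) where
  measurable_const_mul c := by
    apply Measurable.subtype_mk
    show Measurable fun x : ↥(Matrix.orthogonalGroup (Fin n) ℝ) =>
      ((c : Matrix (Fin n) (Fin n) ℝ) * (x : Matrix (Fin n) (Fin n) ℝ))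
    apply measurable_pi_lambda; intro i
    apply measurable_pi_lambda; intro j
    show Measurable fun x : ↥(Matrix.orthogonalGroup (Fin n) ℝ) =>
      ((c : Matrix (Fin n) (Fin n) ℝ) * (x : Matrix (Fin n) (Fin n) ℝ)) i j
    simp only [Matrix.mul_apply]
    exact Finset.measurable_sum _ fun k _ => (measurable_entry k j).const_mul _
  measurable_mul_const c := by
    apply Measurable.subtype_mk
    show Measurable fun x : ↥(Matrix.orthogonalGroup (Fin n) ℝ) =>
      ((x : Matrix (Fin n) (Fin n) ℝ) * (c : Matrix (Fin n) (Fin n) ℝ))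
    apply measurable_pi_lambda; intro i
    apply measurable_pi_lambda; intro j
    show Measurable fun x : ↥(Matrix.orthogonalGroup (Fin n) ℝ) =>
      ((x : Matrix (Fin n) (Fin n) ℝ) * (c : Matrix (Fin n) (Fin n) ℝ)) i j
    simp only [Matrix.mul_apply]
    exact Finset.measurable_sum _ fun k _ => (measurable_entry i k).mul_const _

lemma col_sq_sum (Q : ↥(Matrix.orthogonalGroup (Fin n) ℝ)) (j : Fin n) :
    ∑ k, ((Q : Matrix (Fin n) (Fin n) ℝ) k j) ^ 2 = 1 := by
  have h : star (Q : Matrix (Fin n) (Fin n) ℝ) * (Q : Matrix (Fin n) (Fin n) ℝ) = 1 := Q.2.1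
  have := congrFun (congrFun h j) j
  simp only [Matrix.mul_apply, Matrix.one_apply_eq, Matrix.star_apply, star_trivial] at this
  rw [← this]
  exact Finset.sum_congr rfl fun k _ => by ring

lemma entry_sq_le (Q : ↥(Matrix.orthogonalGroup (Fin n) ℝ)) (i j : Fin n) :
    ((Q : Matrix (Fin n) (Fin n) ℝ) i j) ^ 2 ≤ 1 := by
  rw [← col_sq_sum Q j]
  exact Finset.single_le_sum (f := fun k => ((Q : Matrix (Fin n) (Fin n) ℝ) k j) ^ 2)
    (fun k _ => sq_nonneg _) (Finset.mem_univ i)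

lemma integrable_pair (μ : Measure ↥(Matrix.orthogonalGroup (Fin n) ℝ)) [IsProbabilityMeasure μ]
    (i j c : Fin n) :
    Integrable (fun Q : ↥(Matrix.orthogonalGroup (Fin n) ℝ) =>
      ((Q : Matrix (Fin n) (Fin n) ℝ) i c) ^ 2
        * ((Q : Matrix (Fin n) (Fin n) ℝ) j c) ^ 2) μ := by
  refine ⟨(((measurable_entry _ _).pow_const 2).mul
    ((measurable_entry _ _).pow_const 2)).aestronglyMeasurable, ?_⟩
  apply HasFiniteIntegral.of_bounded (C := 1)
  refine ae_of_all _ fun Q => ?_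
  have h1 := entry_sq_le Q i c
  have h2 := entry_sq_le Q j c
  have h3 := sq_nonneg ((Q : Matrix (Fin n) (Fin n) ℝ) i c)
  have h4 := sq_nonneg ((Q : Matrix (Fin n) (Fin n) ℝ) j c)
  rw [Real.norm_eq_abs, abs_of_nonneg (mul_nonneg h3 h4)]
  nlinarith

noncomputable def Jm (μ : Measure ↥(Matrix.orthogonalGroup (Fin n) ℝ)) (c i j : Fin n) : ℝ :=
  ∫ Q, ((Q : Matrix (Fin n) (Fin n) ℝ) i c) ^ 2 * ((Q : Matrix (Fin n) (Fin n) ℝ) j c) ^ 2 ∂μ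

section moments

variable (μ : Measure ↥(Matrix.orthogonalGroup (Fin n) ℝ))
  [IsProbabilityMeasure μ] [μ.IsMulLeftInvariant] (c : Fin n)

lemma Jm_perm (σ : Equiv.Perm (Fin n)) (i j : Fin n) :
    Jm μ c (σ.symm i) (σ.symm j) = Jm μ c i j := by
  have hinv := integral_mul_left_eq_self (μ := μ)
    (fun Q : ↥(Matrix.orthogonalGroup (Fin n) ℝ) =>
      ((Q : Matrix (Fin n) (Fin n) ℝ) i c) ^ 2 * ((Q : Matrix (Fin n) (Fin n) ℝ) j c) ^ 2)
    ⟨pmat σ, pmat_mem σ⟩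
  refine Eq.trans ?_ hinv
  refine integral_congr_ae (ae_of_all _ fun Q => ?_)
  have e1 : (((⟨pmat σ, pmat_mem σ⟩ : ↥(Matrix.orthogonalGroup (Fin n) ℝ)) * Q :
      ↥(Matrix.orthogonalGroup (Fin n) ℝ)) : Matrix (Fin n) (Fin n) ℝ)
      = pmat σ * (Q : Matrix (Fin n) (Fin n) ℝ) := rfl
  simp only [e1, pmat_mul_apply]

lemma Jm_diag (i0 : Fin n) (i : Fin n) : Jm μ c i i = Jm μ c i0 i0 := by
  have := Jm_perm μ c (Equiv.swap i0 i) i0 i0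
  rwa [Equiv.symm_swap, Equiv.swap_apply_left] at this

lemma Jm_off {i0 i1 : Fin n} (h01 : i0 ≠ i1) {i j : Fin n} (hij : i ≠ j) :
    Jm μ c i j = Jm μ c i0 i1 := by
  classical
  set τ := Equiv.swap i0 i with hτ
  have hτ0 : τ i0 = i := Equiv.swap_apply_left _ _
  have hτj : τ j ≠ i0 := by
    intro hh
    apply hij
    have h2 : τ (τ j) = τ i0 := congrArg τ hh
    rw [Equiv.swap_apply_self, hτ0] at h2
    exact h2.symm
  have he0 : ((Equiv.swap i1 (τ j)).trans τ) i0 = i := by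
    show τ (Equiv.swap i1 (τ j) i0) = i
    rw [Equiv.swap_apply_of_ne_of_ne h01 (Ne.symm hτj), hτ0]
  have he1 : ((Equiv.swap i1 (τ j)).trans τ) i1 = j := by
    show τ (Equiv.swap i1 (τ j) i1) = j
    rw [Equiv.swap_apply_left, Equiv.swap_apply_self]
  have := Jm_perm μ c ((Equiv.swap i1 (τ j)).trans τ).symm i0 i1
  rwa [Equiv.symm_symm, he0, he1] at this

lemma Jm_total : ∑ i : Fin n, ∑ j : Fin n, Jm μ c i j = 1 := by
  have h1 : ∀ i : Fin n, ∑ j, Jm μ c i j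
      = ∫ Q, ∑ j, ((Q : Matrix (Fin n) (Fin n) ℝ) i c) ^ 2
          * ((Q : Matrix (Fin n) (Fin n) ℝ) j c) ^ 2 ∂μ :=
    fun i => (integral_finset_sum _ fun j _ => integrable_pair μ i j c).symm
  rw [Finset.sum_congr rfl fun i _ => h1 i,
    ← integral_finset_sum _ (fun i _ =>
      integrable_finset_sum _ fun j _ => integrable_pair μ i j c)]
  have h2 : ∀ Q : ↥(Matrix.orthogonalGroup (Fin n) ℝ),
      (∑ i, ∑ j, ((Q : Matrix (Fin n) (Fin n) ℝ) i c) ^ 2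
        * ((Q : Matrix (Fin n) (Fin n) ℝ) j c) ^ 2) = 1 := by
    intro Q
    rw [← Finset.sum_mul_sum, col_sq_sum, one_mul]
  rw [integral_congr_ae (ae_of_all _ h2)]
  simp

lemma Jm_rot {i0 i1 : Fin n} (h01 : i0 ≠ i1) :
    Jm μ c i0 i0 + Jm μ c i1 i1
      = (1/2) * Jm μ c i0 i0 + 3 * Jm μ c i0 i1 + (1/2) * Jm μ c i1 i1 := by
  set g : ↥(Matrix.orthogonalGroup (Fin n) ℝ) := ⟨rmat i0 i1, rmat_mem h01⟩ with hg
  have hpt : ∀ Q : ↥(Matrix.orthogonalGroup (Fin n) ℝ),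
      (((g * Q : _) : Matrix (Fin n) (Fin n) ℝ) i0 c) ^ 2
          * (((g * Q : _) : Matrix (Fin n) (Fin n) ℝ) i0 c) ^ 2
        + (((g * Q : _) : Matrix (Fin n) (Fin n) ℝ) i1 c) ^ 2
          * (((g * Q : _) : Matrix (Fin n) (Fin n) ℝ) i1 c) ^ 2
      = (1/2) * (((Q : Matrix (Fin n) (Fin n) ℝ) i0 c) ^ 2
            * ((Q : Matrix (Fin n) (Fin n) ℝ) i0 c) ^ 2)
        + 3 * (((Q : Matrix (Fin n) (Fin n) ℝ) i0 c) ^ 2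
            * ((Q : Matrix (Fin n) (Fin n) ℝ) i1 c) ^ 2)
        + (1/2) * (((Q : Matrix (Fin n) (Fin n) ℝ) i1 c) ^ 2
            * ((Q : Matrix (Fin n) (Fin n) ℝ) i1 c) ^ 2) := by
    intro Q
    have e1 : ((g * Q : ↥(Matrix.orthogonalGroup (Fin n) ℝ)) : Matrix (Fin n) (Fin n) ℝ)
        = rmat i0 i1 * (Q : Matrix (Fin n) (Fin n) ℝ) := rfl
    rw [e1, rmat_mul_apply0 h01, rmat_mul_apply1 h01]
    linear_combination ((cc * cc + 1/2) * (2 * ((Q : Matrix (Fin n) (Fin n) ℝ) i0 c) ^ 4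
      + 12 * ((Q : Matrix (Fin n) (Fin n) ℝ) i0 c) ^ 2 * ((Q : Matrix (Fin n) (Fin n) ℝ) i1 c) ^ 2
      + 2 * ((Q : Matrix (Fin n) (Fin n) ℝ) i1 c) ^ 4)) * cc_mul_self
  calc Jm μ c i0 i0 + Jm μ c i1 i1
      = ∫ Q, (((Q : Matrix (Fin n) (Fin n) ℝ) i0 c) ^ 2
            * ((Q : Matrix (Fin n) (Fin n) ℝ) i0 c) ^ 2
          + ((Q : Matrix (Fin n) (Fin n) ℝ) i1 c) ^ 2
            * ((Q : Matrix (Fin n) (Fin n) ℝ) i1 c) ^ 2) ∂μ :=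
        (integral_add (integrable_pair μ i0 i0 c) (integrable_pair μ i1 i1 c)).symm
    _ = ∫ Q, ((((g * Q : _) : Matrix (Fin n) (Fin n) ℝ) i0 c) ^ 2
            * (((g * Q : _) : Matrix (Fin n) (Fin n) ℝ) i0 c) ^ 2
          + (((g * Q : _) : Matrix (Fin n) (Fin n) ℝ) i1 c) ^ 2
            * (((g * Q : _) : Matrix (Fin n) (Fin n) ℝ) i1 c) ^ 2) ∂μ :=
        (integral_mul_left_eq_self (fun Q : ↥(Matrix.orthogonalGroup (Fin n) ℝ) =>
          ((Q : Matrix (Fin n) (Fin n) ℝ) i0 c) ^ 2 * ((Q : Matrix (Fin n) (Fin n) ℝ) i0 c) ^ 2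
          + ((Q : Matrix (Fin n) (Fin n) ℝ) i1 c) ^ 2
            * ((Q : Matrix (Fin n) (Fin n) ℝ) i1 c) ^ 2) g).symm
    _ = ∫ Q, ((1/2) * (((Q : Matrix (Fin n) (Fin n) ℝ) i0 c) ^ 2
            * ((Q : Matrix (Fin n) (Fin n) ℝ) i0 c) ^ 2)
          + 3 * (((Q : Matrix (Fin n) (Fin n) ℝ) i0 c) ^ 2
            * ((Q : Matrix (Fin n) (Fin n) ℝ) i1 c) ^ 2)
          + (1/2) * (((Q : Matrix (Fin n) (Fin n) ℝ) i1 c) ^ 2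
            * ((Q : Matrix (Fin n) (Fin n) ℝ) i1 c) ^ 2)) ∂μ :=
        integral_congr_ae (ae_of_all _ hpt)
    _ = (1/2) * Jm μ c i0 i0 + 3 * Jm μ c i0 i1 + (1/2) * Jm μ c i1 i1 := by
        have hf00 : Integrable (fun Q : ↥(Matrix.orthogonalGroup (Fin n) ℝ) =>
            (1/2 : ℝ) * (((Q : Matrix (Fin n) (Fin n) ℝ) i0 c) ^ 2
              * ((Q : Matrix (Fin n) (Fin n) ℝ) i0 c) ^ 2)) μ :=
          (integrable_pair μ i0 i0 c).const_mul _
        have hf01 : Integrable (fun Q : ↥(Matrix.orthogonalGroup (Fin n) ℝ) =>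
            (3 : ℝ) * (((Q : Matrix (Fin n) (Fin n) ℝ) i0 c) ^ 2
              * ((Q : Matrix (Fin n) (Fin n) ℝ) i1 c) ^ 2)) μ :=
          (integrable_pair μ i0 i1 c).const_mul _
        have hf11 : Integrable (fun Q : ↥(Matrix.orthogonalGroup (Fin n) ℝ) =>
            (1/2 : ℝ) * (((Q : Matrix (Fin n) (Fin n) ℝ) i1 c) ^ 2
              * ((Q : Matrix (Fin n) (Fin n) ℝ) i1 c) ^ 2)) μ :=
          (integrable_pair μ i1 i1 c).const_mul _
        have hsum2 : Integrable (fun Q : ↥(Matrix.orthogonalGroup (Fin n) ℝ) =>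
            (1/2 : ℝ) * (((Q : Matrix (Fin n) (Fin n) ℝ) i0 c) ^ 2
              * ((Q : Matrix (Fin n) (Fin n) ℝ) i0 c) ^ 2)
            + (3 : ℝ) * (((Q : Matrix (Fin n) (Fin n) ℝ) i0 c) ^ 2
              * ((Q : Matrix (Fin n) (Fin n) ℝ) i1 c) ^ 2)) μ := hf00.add hf01
        rw [integral_add hsum2 hf11, integral_add hf00 hf01,
          integral_const_mul, integral_const_mul, integral_const_mul]
        rfl

end moments

/-- fourth moments of entries of a Haar-distributed orthogonal matrix:
`∫ Q₁₁⁴ dμ = 3/(n(n+2))` and `∫ Q₁₁²Q₂₁² dμ = 1/(n(n+2))`. -/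
theorem haar_orthogonal_fourth_moments
    (n : ℕ) (hn : 2 ≤ n)
    (μ : Measure ↥(Matrix.orthogonalGroup (Fin n) ℝ))
    [IsProbabilityMeasure μ] [μ.IsMulLeftInvariant] :
    (∫ Q, ((Q : Matrix (Fin n) (Fin n) ℝ) ⟨0, by omega⟩ ⟨0, by omega⟩) ^ 4 ∂μ
        = 3 / ((n : ℝ) * ((n : ℝ) + 2))) ∧
    (∫ Q, ((Q : Matrix (Fin n) (Fin n) ℝ) ⟨0, by omega⟩ ⟨0, by omega⟩) ^ 2
          * ((Q : Matrix (Fin n) (Fin n) ℝ) ⟨1, by omega⟩ ⟨0, by omega⟩) ^ 2 ∂μ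
        = 1 / ((n : ℝ) * ((n : ℝ) + 2))) := by
  have hh0 : 0 < n := by omega
  have hh1 : 1 < n := by omega
  let i0 : Fin n := ⟨0, hh0⟩
  let i1 : Fin n := ⟨1, hh1⟩
  have h01 : i0 ≠ i1 := by simp [i0, i1, Fin.ext_iff]
  have hrot := Jm_rot μ i0 h01
  have htot := Jm_total μ i0
  have hcount : ∀ i : Fin n, ∑ j, Jm μ i0 i j
      = Jm μ i0 i0 i0 + ((n : ℝ) - 1) * Jm μ i0 i0 i1 := by
    intro i
    have h3 : ∀ j : Fin n, Jm μ i0 i j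
        = Jm μ i0 i0 i1 + (if j = i then Jm μ i0 i0 i0 - Jm μ i0 i0 i1 else 0) := by
      intro j
      by_cases hji : j = i
      · subst hji; rw [if_pos rfl, Jm_diag μ i0 i0 j]; ring
      · rw [if_neg hji, Jm_off μ i0 h01 (fun hh => hji hh.symm)]; ring
    rw [Finset.sum_congr rfl fun j _ => h3 j, Finset.sum_add_distrib, Finset.sum_const,
      Finset.sum_ite_eq' Finset.univ i]
    simp [Finset.card_univ, nsmul_eq_mul]
    ring
  have hlin : (n : ℝ) * (Jm μ i0 i0 i0 + ((n : ℝ) - 1) * Jm μ i0 i0 i1) = 1 := by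
    calc (n : ℝ) * (Jm μ i0 i0 i0 + ((n : ℝ) - 1) * Jm μ i0 i0 i1)
        = ∑ _i : Fin n, (Jm μ i0 i0 i0 + ((n : ℝ) - 1) * Jm μ i0 i0 i1) := by
          rw [Finset.sum_const, Finset.card_univ, Fintype.card_fin, nsmul_eq_mul]
      _ = ∑ i : Fin n, ∑ j, Jm μ i0 i j := (Finset.sum_congr rfl fun i _ => (hcount i).symm)
      _ = 1 := htot
  have hJ11 : Jm μ i0 i1 i1 = Jm μ i0 i0 i0 := Jm_diag μ i0 i0 i1
  rw [hJ11] at hrot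
  have h3m : Jm μ i0 i0 i0 = 3 * Jm μ i0 i0 i1 := by linarith
  have hnR : (2 : ℝ) ≤ (n : ℝ) := by exact_mod_cast hn
  have hpos : (0 : ℝ) < (n : ℝ) * ((n : ℝ) + 2) := by nlinarith
  have hJ01 : Jm μ i0 i0 i1 = 1 / ((n : ℝ) * ((n : ℝ) + 2)) := by
    rw [eq_div_iff hpos.ne']
    linear_combination hlin - (n : ℝ) * h3m
  have hJ00 : Jm μ i0 i0 i0 = 3 / ((n : ℝ) * ((n : ℝ) + 2)) := by rw [h3m, hJ01]; ring
  constructor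
  · have e4 : (∫ Q, ((Q : Matrix (Fin n) (Fin n) ℝ) i0 i0) ^ 4 ∂μ) = Jm μ i0 i0 i0 :=
      integral_congr_ae (ae_of_all _ fun Q => by show _ = _ * _; ring)
    exact e4.trans hJ00
  · exact hJ01
end

section
/- Let p ≥ 2 and n > p be integers. Then ∫_{B} x₁²·x₂² · (1 − ‖x‖₂²)^{(n−p−2)/2} dx = (1/(n(n+2))) · π^{p/2} · Γ((n−p)/2) / Γ(n/2), where B = {x ∈ ℝᵖ : ‖x‖₂ < 1} is the open unit ball and the integral is with respect to Lebesgue measure on ℝᵖ. -/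
open MeasureTheory Real Set Metric

set_option maxHeartbeats 1000000

section BallIntegralAux
noncomputable section




/-- Integral against `volumeIoiPow`. -/
lemma ballaux_radial (m : ℕ) (k : ℝ → ℝ) :
    ∫ x : Ioi (0:ℝ), k x ∂(Measure.volumeIoiPow m)
      = ∫ y in Ioi (0:ℝ), y ^ m * k y := by
  rw [Measure.volumeIoiPow]
  simp only [ENNReal.ofReal]
  rw [integral_withDensity_eq_integral_smul
      ((measurable_subtype_coe.pow_const _).real_toNNReal),
    integral_subtype_comap measurableSet_Ioi
      (fun a : ℝ => (a ^ m).toNNReal • k a)]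
  refine setIntegral_congr_fun measurableSet_Ioi fun x hx => ?_
  rw [NNReal.smul_def, Real.coe_toNNReal _ (pow_nonneg hx.out.le _), smul_eq_mul]

/-- Polar decomposition of an integral over `EuclideanSpace ℝ (Fin p)`. -/
lemma ballaux_polar {p : ℕ} (hp0 : 0 < p) (f : EuclideanSpace ℝ (Fin p) → ℝ) :
    ∫ x, f x
      = ∫ q : sphere (0 : EuclideanSpace ℝ (Fin p)) 1 × Ioi (0:ℝ),
          f ((q.2 : ℝ) • (q.1 : EuclideanSpace ℝ (Fin p)))
        ∂((volume : Measure (EuclideanSpace ℝ (Fin p))).toSphere.prod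
            (Measure.volumeIoiPow (p - 1))) := by
  haveI : Nontrivial (EuclideanSpace ℝ (Fin p)) :=
    Module.nontrivial_of_finrank_pos (R := ℝ)
      (by rw [finrank_euclideanSpace_fin]; exact hp0)
  have h1 : ∫ x, f x ∂(volume : Measure (EuclideanSpace ℝ (Fin p)))
      = ∫ x : ({0}ᶜ : Set (EuclideanSpace ℝ (Fin p))), f x ∂(volume.comap Subtype.val) := by
    rw [integral_subtype_comap (measurableSet_singleton 0).compl,
      restrict_compl_singleton]
  have h2 := (Measure.measurePreserving_homeomorphUnitSphereProd
      (volume : Measure (EuclideanSpace ℝ (Fin p)))).integral_comp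
      (Homeomorph.measurableEmbedding _)
      (fun q : sphere (0 : EuclideanSpace ℝ (Fin p)) 1 × Ioi (0:ℝ) =>
        f ((q.2 : ℝ) • (q.1 : EuclideanSpace ℝ (Fin p))))
  rw [finrank_euclideanSpace_fin] at h2
  rw [h1, ← h2]
  refine integral_congr_ae (Filter.Eventually.of_forall fun x => ?_)
  simp only [homeomorphUnitSphereProd_apply_snd_coe,
    homeomorphUnitSphereProd_apply_fst_coe]
  rw [smul_inv_smul₀ (norm_ne_zero_iff.2 x.2)]

/-- Factored polar integral. -/
lemma ballaux_factor {p : ℕ} (hp0 : 0 < p) (f : EuclideanSpace ℝ (Fin p) → ℝ)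
    (h : sphere (0 : EuclideanSpace ℝ (Fin p)) 1 → ℝ) (k : ℝ → ℝ)
    (hfk : ∀ (u : sphere (0 : EuclideanSpace ℝ (Fin p)) 1) (r : ℝ), 0 < r →
      f (r • (u : EuclideanSpace ℝ (Fin p))) = h u * k r) :
    ∫ x, f x
      = (∫ u, h u ∂(volume : Measure (EuclideanSpace ℝ (Fin p))).toSphere)
          * ∫ r in Ioi (0:ℝ), r ^ (p - 1) * k r := by
  rw [ballaux_polar hp0 f]
  have h2 : ∀ q : sphere (0 : EuclideanSpace ℝ (Fin p)) 1 × Ioi (0:ℝ),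
      f ((q.2 : ℝ) • (q.1 : EuclideanSpace ℝ (Fin p))) = h q.1 * k q.2 :=
    fun q => hfk q.1 q.2 q.2.2
  simp_rw [h2]
  rw [integral_prod_mul (fun u => h u) (fun r : Ioi (0:ℝ) => k r)]
  rw [ballaux_radial]




lemma ballaux_beta {a b : ℝ} (ha : 0 < a) (hb : 0 < b) :
    ∫ x in Ioo (0:ℝ) 1, x ^ (a - 1) * (1 - x) ^ (b - 1)
      = Real.Gamma a * Real.Gamma b / Real.Gamma (a + b) := by
  have key := Complex.Gamma_mul_Gamma_eq_betaIntegral (s := (a:ℂ)) (t := (b:ℂ))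
    (by simpa using ha) (by simpa using hb)
  have hbeta : Complex.betaIntegral (a:ℂ) (b:ℂ)
      = ((∫ x in Ioo (0:ℝ) 1, x ^ (a - 1) * (1 - x) ^ (b - 1) : ℝ) : ℂ) := by
    rw [Complex.betaIntegral, intervalIntegral.integral_of_le zero_le_one,
      ← Measure.restrict_congr_set Ioo_ae_eq_Ioc]
    rw [show ((∫ x in Ioo (0:ℝ) 1, x ^ (a - 1) * (1 - x) ^ (b - 1) : ℝ) : ℂ)
      = ∫ x in Ioo (0:ℝ) 1, ((x ^ (a - 1) * (1 - x) ^ (b - 1) : ℝ) : ℂ) from (integral_ofReal).symm]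
    refine setIntegral_congr_fun measurableSet_Ioo fun x hx => ?_
    rw [Complex.ofReal_mul, Complex.ofReal_cpow hx.1.le,
      Complex.ofReal_cpow (by linarith [hx.2] : (0:ℝ) ≤ 1 - x)]
    push_cast
    ring
  rw [hbeta, ← Complex.ofReal_add, Complex.Gamma_ofReal, Complex.Gamma_ofReal,
    Complex.Gamma_ofReal, ← Complex.ofReal_mul, ← Complex.ofReal_mul] at key
  have h2 := Complex.ofReal_inj.1 key
  field_simp [(Real.Gamma_pos_of_pos (show (0:ℝ) < a + b by linarith)).ne'] at h2 ⊢
  linarith [h2]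


lemma ballaux_rpow_pow {x : ℝ} (hx : 0 < x) (m : ℕ) : x ^ ((m : ℝ)) = x ^ m :=
  Real.rpow_natCast x m

lemma ballaux_W : ∫ x : ℝ, Real.exp (-x ^ 2) = Real.Gamma (1/2) := by
  have h0 : ∫ x : ℝ, Real.exp (-x ^ 2) = ∫ x : ℝ, (fun t => Real.exp (-t ^ 2)) |x| := by
    congr 1; funext x; simp [sq_abs]
  rw [h0]
  rw [integral_comp_abs (f := fun t => Real.exp (-t ^ 2))]
  have h1 : ∫ x in Ioi (0:ℝ), Real.exp (-x ^ 2)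
      = ∫ x in Ioi (0:ℝ), x ^ (0:ℝ) * Real.exp (-x ^ (2:ℝ)) := by
    refine setIntegral_congr_fun measurableSet_Ioi fun x hx => ?_
    rw [Real.rpow_zero, one_mul, show (2:ℝ) = ((2:ℕ):ℝ) by norm_num,
      Real.rpow_natCast]
  rw [h1, integral_rpow_mul_exp_neg_rpow two_pos (by norm_num)]
  norm_num
  ring

lemma ballaux_M : ∫ x : ℝ, x ^ 2 * Real.exp (-x ^ 2) = Real.Gamma (3/2) := by
  have h0 : ∫ x : ℝ, x ^ 2 * Real.exp (-x ^ 2)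
      = ∫ x : ℝ, (fun t => t ^ 2 * Real.exp (-t ^ 2)) |x| := by
    congr 1; funext x; simp [sq_abs]
  rw [h0]
  rw [integral_comp_abs (f := fun t => t ^ 2 * Real.exp (-t ^ 2))]
  have h1 : ∫ x in Ioi (0:ℝ), x ^ 2 * Real.exp (-x ^ 2)
      = ∫ x in Ioi (0:ℝ), x ^ (2:ℝ) * Real.exp (-x ^ (2:ℝ)) := by
    refine setIntegral_congr_fun measurableSet_Ioi fun x hx => ?_
    rw [show (2:ℝ) = ((2:ℕ):ℝ) by norm_num, Real.rpow_natCast]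
  rw [h1, integral_rpow_mul_exp_neg_rpow two_pos (by norm_num)]
  norm_num
  ring

/-- substitution `u = r ^ 2` : `∫_{(0,1)} r^m (1-r²)^c dr = (1/2)∫_{(0,1)} u^{(m-1)/2}(1-u)^c du`,
stated for `m = 2s+1` odd to keep exponents clean. -/
lemma ballaux_subst (s c : ℝ) (hs : 0 ≤ s) :
    ∫ r in Ioo (0:ℝ) 1, r ^ (2*s+1) * (1 - r ^ 2) ^ c
      = (1/2) * ∫ u in Ioo (0:ℝ) 1, u ^ s * (1 - u) ^ c := by
  have key := integral_comp_rpow_Ioi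
    (fun u => Set.indicator (Ioo (0:ℝ) 1) (fun u => u ^ s * (1 - u) ^ c) u)
    (p := 2) two_ne_zero
  have hR : ∫ y in Ioi (0:ℝ),
      Set.indicator (Ioo (0:ℝ) 1) (fun u => u ^ s * (1 - u) ^ c) y
      = ∫ u in Ioo (0:ℝ) 1, u ^ s * (1 - u) ^ c := by
    rw [setIntegral_indicator measurableSet_Ioo,
      Set.inter_eq_self_of_subset_right Ioo_subset_Ioi_self]
  have hL : ∫ x in Ioi (0:ℝ), (|2| * x ^ ((2:ℝ) - 1)) •
      Set.indicator (Ioo (0:ℝ) 1) (fun u => u ^ s * (1 - u) ^ c) (x ^ (2:ℝ))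
      = 2 * ∫ r in Ioo (0:ℝ) 1, r ^ (2*s+1) * (1 - r ^ 2) ^ c := by
    have h2 : ∫ x in Ioi (0:ℝ), (|2| * x ^ ((2:ℝ) - 1)) •
        Set.indicator (Ioo (0:ℝ) 1) (fun u => u ^ s * (1 - u) ^ c) (x ^ (2:ℝ))
        = ∫ x in Ioi (0:ℝ),
          Set.indicator (Ioo (0:ℝ) 1) (fun r => 2 * (r ^ (2*s+1) * (1 - r ^ 2) ^ c)) x := by
      refine setIntegral_congr_fun measurableSet_Ioi fun x hx => ?_
      have hx0 : (0:ℝ) < x := hx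
      have hsq : x ^ (2:ℝ) = x ^ 2 := by
        rw [show (2:ℝ) = ((2:ℕ):ℝ) by norm_num, Real.rpow_natCast]
      by_cases hmem : x ∈ Ioo (0:ℝ) 1
      · have hmem2 : x ^ (2:ℝ) ∈ Ioo (0:ℝ) 1 := by
          rw [hsq]
          exact ⟨by positivity, by nlinarith [hmem.2, hmem.1]⟩
        rw [Set.indicator_of_mem hmem2, Set.indicator_of_mem hmem]
        have hxs : (x ^ (2:ℝ)) ^ s = x ^ (2*s) := by
          rw [← Real.rpow_mul hx0.le]
        have h1x : (1 - x ^ (2:ℝ)) = 1 - x ^ 2 := by rw [hsq]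
        rw [smul_eq_mul, hxs, h1x]
        rw [show (2:ℝ) - 1 = 1 by norm_num, Real.rpow_one]
        rw [show (2*s+1 : ℝ) = 2*s + 1 from rfl, Real.rpow_add hx0, Real.rpow_one]
        rw [abs_two]
        ring
      · have hmem2 : x ^ (2:ℝ) ∉ Ioo (0:ℝ) 1 := by
          rw [hsq]
          intro hc
          exact hmem ⟨hx0, by nlinarith [hc.2]⟩
        rw [Set.indicator_of_notMem hmem2, Set.indicator_of_notMem hmem, smul_zero]
    rw [h2]
    have h3 : ∫ x in Ioi (0:ℝ),
        Set.indicator (Ioo (0:ℝ) 1) (fun r => 2 * (r ^ (2*s+1) * (1 - r ^ 2) ^ c)) x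
        = ∫ x in Ioo (0:ℝ) 1, 2 * (x ^ (2*s+1) * (1 - x ^ 2) ^ c) := by
      rw [setIntegral_indicator measurableSet_Ioo,
        Set.inter_eq_self_of_subset_right Ioo_subset_Ioi_self]
    rw [h3, integral_const_mul]
  rw [hL, hR] at key
  linarith [key]
lemma ballaux_gauss {p : ℕ} (i0 i1 : Fin p) (hne : i0 ≠ i1) :
    ∫ x : EuclideanSpace ℝ (Fin p), (x i0) ^ 2 * (x i1) ^ 2 * Real.exp (-‖x‖ ^ 2)
      = Real.Gamma (3/2) ^ 2 * Real.Gamma (1/2) ^ (p - 2) := by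
  classical
  set F : Fin p → ℝ → ℝ :=
    fun i t => (if i = i0 ∨ i = i1 then t ^ 2 else 1) * Real.exp (-t ^ 2) with hF
  have step1 : ∫ x : EuclideanSpace ℝ (Fin p), (x i0) ^ 2 * (x i1) ^ 2 * Real.exp (-‖x‖ ^ 2)
      = ∫ y : Fin p → ℝ, ∏ i, F i (y i) := by
    have hmp := (EuclideanSpace.volume_preserving_symm_measurableEquiv_toLp (Fin p)).integral_comp
      (MeasurableEquiv.measurableEmbedding _)
      (fun y : Fin p → ℝ => ∏ i, F i (y i))
    rw [← hmp]
    refine integral_congr_ae (Filter.Eventually.of_forall fun x => ?_)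
    have hx : ∀ i, (MeasurableEquiv.toLp 2 (Fin p → ℝ)).symm x i = x i := fun i => rfl
    simp only [hx]
    have hnorm : ‖x‖ ^ 2 = ∑ i, (x i) ^ 2 := by
      rw [EuclideanSpace.norm_eq, Real.sq_sqrt (by positivity)]
      simp [Real.norm_eq_abs, sq_abs]
    rw [hnorm, hF]
    simp only []
    rw [Finset.prod_mul_distrib]
    have hexp : ∏ i, Real.exp (-(x i) ^ 2) = Real.exp (-∑ i, (x i) ^ 2) := by
      rw [← Real.exp_sum, Finset.sum_neg_distrib]
    have hsq : (∏ i, if i = i0 ∨ i = i1 then (x i) ^ 2 else 1)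
        = (x i0) ^ 2 * (x i1) ^ 2 := by
      rw [← Finset.prod_subset (Finset.subset_univ ({i0, i1} : Finset (Fin p)))
        (fun j _ hj => by
          rw [if_neg]
          simp only [Finset.mem_insert, Finset.mem_singleton] at hj
          tauto)]
      rw [Finset.prod_pair hne, if_pos (Or.inl rfl), if_pos (Or.inr rfl)]
    rw [hexp, hsq]
  rw [step1, MeasureTheory.integral_fintype_prod_volume_eq_prod F]
  have hint : ∀ i, (∫ t : ℝ, F i t)
      = if i = i0 ∨ i = i1 then Real.Gamma (3/2) else Real.Gamma (1/2) := by
    intro i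
    by_cases hi : i = i0 ∨ i = i1
    · simp only [hF, hi, if_true, if_pos]
      exact ballaux_M
    · simp only [hF, hi, if_false, if_neg, one_mul]
      exact ballaux_W
  simp_rw [hint]
  rw [← Finset.prod_sdiff (Finset.subset_univ ({i0, i1} : Finset (Fin p)))]
  have h1 : ∏ j ∈ ({i0, i1} : Finset (Fin p)),
      (if j = i0 ∨ j = i1 then Real.Gamma (3/2) else Real.Gamma (1/2))
      = Real.Gamma (3/2) ^ 2 := by
    rw [Finset.prod_pair hne, if_pos (Or.inl rfl), if_pos (Or.inr rfl)]; ring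
  have h2 : ∏ j ∈ (Finset.univ \ ({i0, i1} : Finset (Fin p))),
      (if j = i0 ∨ j = i1 then Real.Gamma (3/2) else Real.Gamma (1/2))
      = Real.Gamma (1/2) ^ (p - 2) := by
    rw [Finset.prod_congr rfl (fun j hj => ?_), Finset.prod_const]
    · congr 1
      rw [Finset.card_sdiff_of_subset (Finset.subset_univ _), Finset.card_univ, Fintype.card_fin,
        Finset.card_pair hne]
    · rw [if_neg]
      simp only [Finset.mem_sdiff, Finset.mem_insert, Finset.mem_singleton] at hj
      tauto
  rw [h1, h2]
  ring

end
end BallIntegralAux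

/-- `∫_{‖x‖<1} x₁²x₂² (1−‖x‖²)^{(n−p−2)/2} dx
  = (1/(n(n+2))) π^{p/2} Γ((n−p)/2)/Γ(n/2)`. -/
theorem ball_integral_mixed_fourth_power
    (p n : ℕ) (hp : 2 ≤ p) (hnp : p < n) :
    ∫ x in Metric.ball (0 : EuclideanSpace ℝ (Fin p)) 1,
        (x ⟨0, by omega⟩) ^ 2 * (x ⟨1, by omega⟩) ^ 2
          * (1 - ‖x‖ ^ 2) ^ (((n : ℝ) - (p : ℝ) - 2) / 2)
      = (1 / ((n : ℝ) * ((n : ℝ) + 2))) * Real.pi ^ ((p : ℝ) / 2)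
          * Real.Gamma (((n : ℝ) - (p : ℝ)) / 2) / Real.Gamma ((n : ℝ) / 2) := by
  have hp0 : 0 < p := by omega
  have hpR : (0:ℝ) ≤ (p : ℝ) := Nat.cast_nonneg p
  have hnR : (0:ℝ) < (n : ℝ) := by exact_mod_cast (by omega : 0 < n)
  have hpnR : (p : ℝ) < (n : ℝ) := by exact_mod_cast hnp
  have key : ∀ (i0 i1 : Fin p), i0 ≠ i1 →
      ∫ x in Metric.ball (0 : EuclideanSpace ℝ (Fin p)) 1,
        (x i0) ^ 2 * (x i1) ^ 2 * (1 - ‖x‖ ^ 2) ^ (((n : ℝ) - (p : ℝ) - 2) / 2)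
      = (1 / ((n : ℝ) * ((n : ℝ) + 2))) * Real.pi ^ ((p : ℝ) / 2)
          * Real.Gamma (((n : ℝ) - (p : ℝ)) / 2) / Real.Gamma ((n : ℝ) / 2) := by
    intro i0 i1 hne
    set α : ℝ := ((n : ℝ) - (p : ℝ) - 2) / 2 with hα
    set H : sphere (0 : EuclideanSpace ℝ (Fin p)) 1 → ℝ :=
      fun u => ((u : EuclideanSpace ℝ (Fin p)) i0) ^ 2
        * ((u : EuclideanSpace ℝ (Fin p)) i1) ^ 2 with hH
    have hcoord : ∀ (r : ℝ) (u : EuclideanSpace ℝ (Fin p)) (i : Fin p),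
        (r • u) i = r * u i := fun _ _ _ => rfl
    have hnorm : ∀ (u : sphere (0 : EuclideanSpace ℝ (Fin p)) 1) (r : ℝ), 0 < r →
        ‖r • (u : EuclideanSpace ℝ (Fin p))‖ = r := by
      intro u r hr
      rw [norm_smul, mem_sphere_zero_iff_norm.1 u.2, Real.norm_eq_abs, abs_of_pos hr, mul_one]
    have hpow : ∀ x : ℝ, x ^ (p - 1) * x ^ 4 = x ^ (p + 3) := by
      intro x
      rw [← pow_add]
      congr 1
      omega
    -- Gaussian side
    have hGfac := ballaux_factor hp0
      (fun x : EuclideanSpace ℝ (Fin p) => (x i0) ^ 2 * (x i1) ^ 2 * Real.exp (-‖x‖ ^ 2)) H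
      (fun r => r ^ 4 * Real.exp (-r ^ 2))
      (by
        intro u r hr
        simp only [hcoord, hnorm u r hr, hH]
        ring)
    -- Ball side
    have hBfac := ballaux_factor hp0
      ((Metric.ball (0 : EuclideanSpace ℝ (Fin p)) 1).indicator
        (fun x => (x i0) ^ 2 * (x i1) ^ 2 * (1 - ‖x‖ ^ 2) ^ α)) H
      ((Ioo (0:ℝ) 1).indicator (fun r => r ^ 4 * (1 - r ^ 2) ^ α))
      (by
        intro u r hr
        by_cases h1 : r < 1
        · have hmem : r • (u : EuclideanSpace ℝ (Fin p)) ∈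
              Metric.ball (0 : EuclideanSpace ℝ (Fin p)) 1 :=
            mem_ball_zero_iff.2 (by rw [hnorm u r hr]; exact h1)
          rw [Set.indicator_of_mem hmem, Set.indicator_of_mem (show r ∈ Ioo (0:ℝ) 1 from ⟨hr, h1⟩)]
          simp only [hcoord, hnorm u r hr, hH]
          ring
        · have hmem : r • (u : EuclideanSpace ℝ (Fin p)) ∉
              Metric.ball (0 : EuclideanSpace ℝ (Fin p)) 1 := by
            rw [mem_ball_zero_iff, hnorm u r hr]
            exact h1
          rw [Set.indicator_of_notMem hmem,
            Set.indicator_of_notMem (show r ∉ Ioo (0:ℝ) 1 from fun hc => h1 hc.2), mul_zero])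
    beta_reduce at hGfac
    -- radial integral, Gaussian side
    have hBG : ∫ r in Ioi (0:ℝ), r ^ (p - 1) * (r ^ 4 * Real.exp (-r ^ 2))
        = (1/2) * Real.Gamma (((p : ℝ) + 4) / 2) := by
      have h1 : ∫ r in Ioi (0:ℝ), r ^ (p - 1) * (r ^ 4 * Real.exp (-r ^ 2))
          = ∫ r in Ioi (0:ℝ), r ^ (((p : ℝ) + 3)) * Real.exp (-r ^ (2:ℝ)) := by
        refine setIntegral_congr_fun measurableSet_Ioi fun x hx => ?_
        rw [show ((p : ℝ) + 3) = ((p + 3 : ℕ) : ℝ) by push_cast; ring, Real.rpow_natCast,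
          show (2:ℝ) = ((2:ℕ):ℝ) by norm_num, Real.rpow_natCast,
          ← mul_assoc, hpow]
      rw [h1, integral_rpow_mul_exp_neg_rpow two_pos (by linarith)]
      rw [show ((p : ℝ) + 3 + 1) / 2 = ((p : ℝ) + 4) / 2 by ring]
    -- radial integral, ball side
    have hBB : ∫ r in Ioi (0:ℝ), r ^ (p - 1) *
          (Ioo (0:ℝ) 1).indicator (fun r => r ^ 4 * (1 - r ^ 2) ^ α) r
        = (1/2) * (Real.Gamma (((p : ℝ) + 4) / 2) * Real.Gamma (((n : ℝ) - (p : ℝ)) / 2)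
            / Real.Gamma (((p : ℝ) + 4) / 2 + ((n : ℝ) - (p : ℝ)) / 2)) := by
      have h1 : (fun r : ℝ => r ^ (p - 1) *
            (Ioo (0:ℝ) 1).indicator (fun r => r ^ 4 * (1 - r ^ 2) ^ α) r)
          = (Ioo (0:ℝ) 1).indicator
              (fun r => r ^ (2 * (((p : ℝ) + 2) / 2) + 1) * (1 - r ^ 2) ^ α) := by
        funext r
        by_cases hrm : r ∈ Ioo (0:ℝ) 1
        · rw [Set.indicator_of_mem hrm, Set.indicator_of_mem hrm,
            show (2 * (((p : ℝ) + 2) / 2) + 1) = ((p + 3 : ℕ) : ℝ) by push_cast; ring,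
            Real.rpow_natCast, ← mul_assoc, hpow]
        · rw [Set.indicator_of_notMem hrm, Set.indicator_of_notMem hrm, mul_zero]
      rw [h1, setIntegral_indicator measurableSet_Ioo,
        Set.inter_eq_self_of_subset_right Ioo_subset_Ioi_self,
        ballaux_subst (((p : ℝ) + 2) / 2) α (by positivity)]
      have h2 : ∫ u in Ioo (0:ℝ) 1, u ^ (((p : ℝ) + 2) / 2) * (1 - u) ^ α
          = Real.Gamma (((p : ℝ) + 4) / 2) * Real.Gamma (((n : ℝ) - (p : ℝ)) / 2)
            / Real.Gamma (((p : ℝ) + 4) / 2 + ((n : ℝ) - (p : ℝ)) / 2) := by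
        have hbb := ballaux_beta (a := ((p : ℝ) + 4) / 2) (b := ((n : ℝ) - (p : ℝ)) / 2)
          (by positivity) (by linarith)
        rw [show ((p : ℝ) + 4) / 2 - 1 = ((p : ℝ) + 2) / 2 by ring,
          show ((n : ℝ) - (p : ℝ)) / 2 - 1 = α by rw [hα]; ring] at hbb
        exact hbb
      rw [h2]
    -- Gauss value
    have hGval := ballaux_gauss i0 i1 hne
    rw [hGfac, hBG] at hGval
    -- value of the Gaussian product
    have hc2 : ((p - 2 : ℕ) : ℝ) = (p : ℝ) - 2 := by
      rw [Nat.cast_sub hp]; norm_num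
    have hGnum : Real.Gamma (3/2) ^ 2 * Real.Gamma (1/2) ^ (p - 2)
        = (1/4) * Real.pi ^ ((p : ℝ) / 2) := by
      rw [show (3/2 : ℝ) = 1/2 + 1 by norm_num, Real.Gamma_add_one (by norm_num),
        Real.Gamma_one_half_eq, Real.sqrt_eq_rpow, mul_pow,
        ← Real.rpow_natCast (Real.pi ^ ((1:ℝ)/2)) (p - 2),
        ← Real.rpow_natCast (Real.pi ^ ((1:ℝ)/2)) 2,
        ← Real.rpow_mul Real.pi_pos.le, ← Real.rpow_mul Real.pi_pos.le,
        mul_assoc, ← Real.rpow_add Real.pi_pos, hc2,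
        show (1:ℝ)/2 * ((2:ℕ):ℝ) + 1/2 * ((p : ℝ) - 2) = (p : ℝ) / 2 by push_cast; ring]
      norm_num
    rw [hGnum] at hGval
    -- assemble
    rw [← integral_indicator measurableSet_ball, hBfac, hBB]
    have hΓn : 0 < Real.Gamma ((n : ℝ) / 2) := Real.Gamma_pos_of_pos (by linarith)
    have hend : Real.Gamma (((p : ℝ) + 4) / 2 + ((n : ℝ) - (p : ℝ)) / 2)
        = ((n : ℝ) + 2) / 2 * ((n : ℝ) / 2 * Real.Gamma ((n : ℝ) / 2)) := by
      rw [show ((p : ℝ) + 4) / 2 + ((n : ℝ) - (p : ℝ)) / 2 = ((n : ℝ) + 2) / 2 + 1 by ring,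
        Real.Gamma_add_one (by linarith), show ((n : ℝ) + 2) / 2 = (n : ℝ) / 2 + 1 by ring,
        Real.Gamma_add_one (by linarith)]
    rw [hend]
    have hsplit : (∫ u, H u ∂(volume :
          Measure (EuclideanSpace ℝ (Fin p))).toSphere) *
        ((1/2) * (Real.Gamma (((p : ℝ) + 4) / 2) * Real.Gamma (((n : ℝ) - (p : ℝ)) / 2)
            / (((n : ℝ) + 2) / 2 * ((n : ℝ) / 2 * Real.Gamma ((n : ℝ) / 2)))))
        = ((∫ u, H u ∂(volume :
          Measure (EuclideanSpace ℝ (Fin p))).toSphere) * ((1/2) * Real.Gamma (((p : ℝ) + 4) / 2)))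
          * (Real.Gamma (((n : ℝ) - (p : ℝ)) / 2)
            / (((n : ℝ) + 2) / 2 * ((n : ℝ) / 2 * Real.Gamma ((n : ℝ) / 2)))) := by
      ring
    rw [hsplit, hGval]
    rw [div_eq_div_iff (by positivity) (by positivity)] at *
    field_simp
    ring
  exact key ⟨0, by omega⟩ ⟨1, by omega⟩ (by simp [Fin.ext_iff])
end
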